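/- Let G be a (weakly connected) digraph, and x, y chip-distributions such that there exists f ∈ ℕ^V with y = x + Lf. Suppose that for each strongly connected component of G, with vertex set V' and induced sub-digraph G', either f restricted to V' is the zero vector, or y restricted to V' is a recurrent chip-distribution on G'. Then x ⤳ y. -/

import Mathlib

namespace ChipFiring

variable {V : Type*}

/-- Out-degree of a vertex: total multiplicity of edges leaving `v`. -/
def outdeg [Fintype V] (d : V → V → ℕ) (v : V) : ℕ := ∑ u, d v u

/-- In-degree of a vertex: total multiplicity of edges entering `v`. -/
def indeg [Fintype V] (d : V → V → ℕ) (v : V) : ℕ := ∑ u, d u v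

/-- A digraph (multiplicity function) has no loops. -/
def Loopless (d : V → V → ℕ) : Prop := ∀ v, d v v = 0

/-- Weak connectivity: each pair of vertices is joined by an undirected walk. -/
def WeaklyConnected (d : V → V → ℕ) : Prop :=
  ∀ u v : V, Relation.ReflTransGen (fun a b => d a b ≠ 0 ∨ d b a ≠ 0) u v

/-- Strong connectivity: each ordered pair of vertices is joined by a directed walk. -/
def StronglyConnected (d : V → V → ℕ) : Prop :=
  ∀ u v : V, Relation.ReflTransGen (fun a b => d a b ≠ 0) u v

/-- Eulerian: out-degree equals in-degree at each vertex. -/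
def Eulerian [Fintype V] (d : V → V → ℕ) : Prop := ∀ v, outdeg d v = indeg d v

/-- The Laplacian matrix: `L(u,u) = -d⁺(u)`, and `L(u,v) = d(v,u)` for `u ≠ v`. -/
def laplacian [Fintype V] [DecidableEq V] (d : V → V → ℕ) : Matrix V V ℤ :=
  fun u v => if u = v then -(outdeg d v : ℤ) else (d v u : ℤ)

/-- Firing vertex `v`: `v` sends one chip along each outgoing edge. -/
def fire [Fintype V] [DecidableEq V] (d : V → V → ℕ) (x : V → ℕ) (v : V) : V → ℕ :=
  fun u => if u = v then x v - outdeg d v else x u + d v u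

/-- `LegalSeq d x α` : the sequence of firings `α` is legal from initial distribution `x`. -/
def LegalSeq [Fintype V] [DecidableEq V] (d : V → V → ℕ) : (V → ℕ) → List V → Prop
  | _, [] => True
  | x, v :: rest => outdeg d v ≤ x v ∧ LegalSeq d (fire d x v) rest

/-- The chip-distribution obtained from `x` after performing the firings `α`. -/
def runGame [Fintype V] [DecidableEq V] (d : V → V → ℕ) : (V → ℕ) → List V → (V → ℕ)
  | x, [] => x
  | x, v :: rest => runGame d (fire d x v) rest

/-- The firing vector of a game: how many times each vertex is fired. -/
def firingVector [DecidableEq V] (α : List V) : V → ℕ := fun v => α.count v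

/-- `x ⤳ y` : some legal game transforms `x` into `y`. -/
def Reaches [Fintype V] [DecidableEq V] (d : V → V → ℕ) (x y : V → ℕ) : Prop :=
  ∃ α : List V, LegalSeq d x α ∧ runGame d x α = y

/-- A period vector: a nonnegative integer vector in the kernel of the Laplacian. -/
def PeriodVector [Fintype V] [DecidableEq V] (d : V → V → ℕ) (p : V → ℕ) : Prop :=
  (laplacian d).mulVec (fun v => (p v : ℤ)) = 0

/-- A vector `f ∈ ℕ^V` is reduced if `f ≥ p` fails for every nonzero period vector `p`. -/
def Reduced [Fintype V] [DecidableEq V] (d : V → V → ℕ) (f : V → ℕ) : Prop :=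
  ∀ p : V → ℕ, PeriodVector d p → p ≠ 0 → ¬ (∀ v, p v ≤ f v)

/-- A distribution is recurrent if a nonempty legal game transforms it back to itself. -/
def Recurrent [Fintype V] [DecidableEq V] (d : V → V → ℕ) (x : V → ℕ) : Prop :=
  ∃ α : List V, α ≠ [] ∧ LegalSeq d x α ∧ runGame d x α = x

/-- Linear equivalence: `x = y + Lz` for some integer vector `z`. -/
def LinEquiv [Fintype V] [DecidableEq V] (d : V → V → ℕ) (x y : V → ℕ) : Prop :=
  ∃ z : V → ℤ, ∀ v, (x v : ℤ) = (y v : ℤ) + (laplacian d).mulVec z v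

/-- `x` is non-terminating: there is an infinite sequence of legal firings from `x`. -/
def NonTerminating [Fintype V] [DecidableEq V] (d : V → V → ℕ) (x : V → ℕ) : Prop :=
  ∃ s : ℕ → V, ∀ n : ℕ, LegalSeq d x (List.ofFn (fun i : Fin n => s i))

end ChipFiring

namespace ChipFiring

open Finset

variable {V : Type*} [Fintype V] [DecidableEq V]

lemma lap_mulVec (d : V → V → ℕ) (h : V → ℤ) (v : V) :
    (laplacian d).mulVec h v
      = -(outdeg d v : ℤ) * h v + ∑ u, (if u = v then 0 else (d u v : ℤ) * h u) := by
  have hmv : (laplacian d).mulVec h v = ∑ u, laplacian d v u * h u := rfl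
  rw [hmv,
    show (∑ u, laplacian d v u * h u)
      = ∑ u, ((if u = v then -(outdeg d v : ℤ) * h v else 0) +
              (if u = v then 0 else (d u v : ℤ) * h u)) from
      Finset.sum_congr rfl (fun u _ => by
        by_cases hu : u = v
        · subst hu; simp [laplacian]
        · simp [laplacian, hu, Ne.symm hu]),
    Finset.sum_add_distrib, Finset.sum_ite_eq' Finset.univ v]
  simp

lemma mulVec_delta (M : Matrix V V ℤ) (v w : V) :
    M.mulVec (fun u => if u = v then 1 else 0) w = M w v := by
  have hmv : M.mulVec (fun u => if u = v then 1 else 0) w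
      = ∑ u, M w u * (if u = v then 1 else 0) := rfl
  rw [hmv]
  simp [mul_ite, Finset.sum_ite_eq' Finset.univ v]

lemma fire_cast (d : V → V → ℕ) (x : V → ℕ) (v : V) (h : outdeg d v ≤ x v) (u : V) :
    ((fire d x v) u : ℤ) = (x u : ℤ) + laplacian d u v := by
  unfold fire laplacian
  by_cases hu : u = v
  · subst hu
    rw [if_pos rfl, if_pos rfl, Nat.cast_sub h]
    ring
  · rw [if_neg hu, if_neg hu]
    push_cast; ring

lemma runGame_append (d : V → V → ℕ) :
    ∀ (α β : List V) (x : V → ℕ), runGame d x (α ++ β) = runGame d (runGame d x α) β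
  | [], β, x => rfl
  | v :: α, β, x => by
    show runGame d (fire d x v) (α ++ β) = _
    rw [runGame_append d α β]
    rfl

lemma legalSeq_append (d : V → V → ℕ) :
    ∀ (α β : List V) (x : V → ℕ),
      LegalSeq d x (α ++ β) ↔ LegalSeq d x α ∧ LegalSeq d (runGame d x α) β
  | [], β, x => by simp [LegalSeq, runGame]
  | v :: α, β, x => by
    show (outdeg d v ≤ x v ∧ LegalSeq d (fire d x v) (α ++ β)) ↔ _
    rw [legalSeq_append d α β]
    show _ ↔ (outdeg d v ≤ x v ∧ LegalSeq d (fire d x v) α) ∧ _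
    constructor
    · rintro ⟨h1, h2, h3⟩; exact ⟨⟨h1, h2⟩, h3⟩
    · rintro ⟨⟨h1, h2⟩, h3⟩; exact ⟨h1, h2, h3⟩

omit [Fintype V] in
lemma count_cons_cast (α : List V) (v : V) :
    (fun u => (((v :: α).count u : ℕ) : ℤ))
      = (fun u => ((α.count u : ℕ) : ℤ)) + (fun u => if u = v then 1 else 0) := by
  funext u
  simp only [List.count_cons, Pi.add_apply]
  by_cases hu : u = v
  · simp [hu]
  · simp [hu, Ne.symm hu]

lemma runGame_cast (d : V → V → ℕ) :
    ∀ (α : List V) (x : V → ℕ), LegalSeq d x α →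
      ∀ v, ((runGame d x α) v : ℤ)
        = (x v : ℤ) + (laplacian d).mulVec (fun u => (α.count u : ℤ)) v
  | [], x, _, v => by
    show (x v : ℤ) = _
    rw [show (fun u => ((List.count u ([] : List V) : ℕ) : ℤ)) = (0 : V → ℤ) from
      funext fun u => by simp, Matrix.mulVec_zero]
    simp
  | w :: α, x, hleg, v => by
    show ((runGame d (fire d x w) α) v : ℤ) = _
    rw [runGame_cast d α (fire d x w) hleg.2 v, fire_cast d x w hleg.1 v,
      count_cons_cast α w, Matrix.mulVec_add]
    have hδ : (laplacian d).mulVec (fun u => if u = w then 1 else 0) v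
        = laplacian d v w := mulVec_delta _ _ _
    simp only [Pi.add_apply, hδ]
    ring

def iterSeq (β : List V) : ℕ → List V
  | 0 => []
  | k + 1 => β ++ iterSeq β k

lemma iterSeq_spec (d : V → V → ℕ) (y : V → ℕ) (β : List V)
    (h1 : LegalSeq d y β) (h2 : runGame d y β = y) :
    ∀ k, LegalSeq d y (iterSeq β k) ∧ runGame d y (iterSeq β k) = y
  | 0 => ⟨trivial, rfl⟩
  | k + 1 => by
    obtain ⟨ih1, ih2⟩ := iterSeq_spec d y β h1 h2 k
    constructor
    · rw [show iterSeq β (k+1) = β ++ iterSeq β k from rfl, legalSeq_append, h2]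
      exact ⟨h1, ih1⟩
    · rw [show iterSeq β (k+1) = β ++ iterSeq β k from rfl, runGame_append, h2, ih2]

omit [Fintype V] in
lemma iterSeq_count (β : List V) : ∀ (k : ℕ) (u : V),
    (iterSeq β k).count u = k * β.count u
  | 0, u => by simp [iterSeq]
  | k + 1, u => by
    rw [show iterSeq β (k+1) = β ++ iterSeq β k from rfl, List.count_append,
      iterSeq_count β k u]
    ring

/-- Core selection lemma: walking a legal sequence `γ` from `z`, where
`z = y - L·(count γ)`, and `g ≤ count γ` with `g ≠ 0`, we find a vertex `v`
with `g v ≥ 1` that is "fireable after unfiring `g - 1_v` from `y`". -/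
lemma lemA (d' : V → V → ℕ) (y : V → ℕ) (γ : List V) :
    ∀ (z g : V → ℕ),
      LegalSeq d' z γ →
      (∀ u, g u ≤ γ.count u) →
      (∀ v, (z v : ℤ) = (y v : ℤ)
          - (laplacian d').mulVec (fun u => (γ.count u : ℤ)) v) →
      (∃ v₀, 1 ≤ g v₀) →
      ∃ v, 1 ≤ g v ∧ (outdeg d' v : ℤ)
          ≤ (y v : ℤ) + (outdeg d' v : ℤ) * (g v : ℤ)
            - ∑ u, (if u = v then 0 else (d' u v : ℤ) * (g u : ℤ)) := by
  induction γ with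
  | nil =>
    rintro z g _ hcount _ ⟨v₀, hv₀⟩
    exact absurd (hcount v₀) (by simp; omega)
  | cons a γ ih =>
    intro z g hleg hcount hz hex
    by_cases hc : (a :: γ).count a ≤ g a
    · refine ⟨a, ?_, ?_⟩
      · have h1 : 1 ≤ (a :: γ).count a := by simp [List.count_cons]
        omega
      · have hzv : (outdeg d' a : ℤ) ≤ (z a : ℤ) := by exact_mod_cast hleg.1
        rw [hz a, lap_mulVec] at hzv
        have hsum : ∑ u, (if u = a then 0 else (d' u a : ℤ) * (g u : ℤ))
            ≤ ∑ u, (if u = a then 0 else (d' u a : ℤ) * (((a :: γ).count u : ℕ) : ℤ)) := by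
          refine Finset.sum_le_sum (fun u _ => ?_)
          by_cases hu : u = a
          · simp [hu]
          · rw [if_neg hu, if_neg hu]
            have h1 : (g u : ℤ) ≤ (((a :: γ).count u : ℕ) : ℤ) := by
              exact_mod_cast hcount u
            have h2 : (0:ℤ) ≤ (d' u a : ℤ) := Int.natCast_nonneg _
            exact mul_le_mul_of_nonneg_left h1 h2
        have hgv : (((a :: γ).count a : ℕ) : ℤ) ≤ (g a : ℤ) := by exact_mod_cast hc
        have hodn : (0:ℤ) ≤ (outdeg d' a : ℤ) := Int.natCast_nonneg _
        have hmul : (outdeg d' a : ℤ) * (((a :: γ).count a : ℕ) : ℤ)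
            ≤ (outdeg d' a : ℤ) * (g a : ℤ) := mul_le_mul_of_nonneg_left hgv hodn
        linarith
    · have hcv : ∀ u, g u ≤ γ.count u := by
        intro u
        by_cases hu : u = a
        · subst hu
          have h1 := hcount u
          rw [List.count_cons_self] at h1 hc
          omega
        · have h1 := hcount u
          rwa [List.count_cons_of_ne (Ne.symm hu)] at h1
      have hz' : ∀ w, ((fire d' z a) w : ℤ) = (y w : ℤ)
          - (laplacian d').mulVec (fun u => (γ.count u : ℤ)) w := by
        intro w
        rw [fire_cast d' z a hleg.1 w, hz w]
        have h1 : (laplacian d').mulVec (fun u => (((a :: γ).count u : ℕ) : ℤ)) w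
            = (laplacian d').mulVec (fun u => ((γ.count u : ℕ) : ℤ)) w
              + laplacian d' w a := by
          rw [count_cons_cast γ a, Matrix.mulVec_add]
          simp [mulVec_delta]
        rw [h1]; ring
      exact ih (fire d' z a) g hleg.2 hcv hz' hex

omit [Fintype V] [DecidableEq V] in
/-- Directed paths between vertices of a strongly connected component stay in it. -/
lemma lift_path (d : V → V → ℕ) (w : V) (p : V)
    (hp : Relation.ReflTransGen (fun a b => d a b ≠ 0) w p ∧
          Relation.ReflTransGen (fun a b => d a b ≠ 0) p w) :
    ∀ q : V, Relation.ReflTransGen (fun a b => d a b ≠ 0) p q →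
      ∀ hq : Relation.ReflTransGen (fun a b => d a b ≠ 0) w q ∧
             Relation.ReflTransGen (fun a b => d a b ≠ 0) q w,
      Relation.ReflTransGen
        (fun a b : {u : V // Relation.ReflTransGen (fun a b => d a b ≠ 0) w u ∧
            Relation.ReflTransGen (fun a b => d a b ≠ 0) u w} => d a.1 b.1 ≠ 0)
        ⟨p, hp⟩ ⟨q, hq⟩ := by
  intro q h
  induction h with
  | refl => intro hq; exact Relation.ReflTransGen.refl
  | @tail b c hpb hbc ih =>
    intro hq
    have hb : Relation.ReflTransGen (fun a b => d a b ≠ 0) w b ∧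
        Relation.ReflTransGen (fun a b => d a b ≠ 0) b w :=
      ⟨hp.1.trans hpb, Relation.ReflTransGen.head hbc hq.2⟩
    exact Relation.ReflTransGen.tail (ih hb) hbc

omit [Fintype V] [DecidableEq V] in
lemma comp_strongly_connected (d : V → V → ℕ) (w : V) :
    StronglyConnected
      (fun a b : {u : V // Relation.ReflTransGen (fun a b => d a b ≠ 0) w u ∧
          Relation.ReflTransGen (fun a b => d a b ≠ 0) u w} => d a.1 b.1) := by
  intro a b
  have h1 := lift_path d w a.1 a.2 w a.2.2 ⟨Relation.ReflTransGen.refl, Relation.ReflTransGen.refl⟩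
  have h2 := lift_path d w w ⟨Relation.ReflTransGen.refl, Relation.ReflTransGen.refl⟩ b.1 b.2.1 b.2
  exact h1.trans h2

/-- A nonzero period vector on a loopless strongly connected digraph is positive. -/
lemma period_pos (d' : V → V → ℕ) (hl : Loopless d') (hsc : StronglyConnected d')
    (n : V → ℕ) (hper : ∀ v, (laplacian d').mulVec (fun u => (n u : ℤ)) v = 0)
    (v₀ : V) (h₀ : 1 ≤ n v₀) : ∀ u, 1 ≤ n u := by
  have step : ∀ b c : V, d' b c ≠ 0 → 1 ≤ n b → 1 ≤ n c := by
    intro b c hbc hb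
    by_contra hc
    have hnc : n c = 0 := by omega
    have h1 := hper c
    rw [lap_mulVec] at h1
    have hbne : b ≠ c := fun h => hbc (h ▸ hl b)
    have hterm : (1:ℤ) ≤ (if b = c then 0 else (d' b c : ℤ) * (n b : ℤ)) := by
      rw [if_neg hbne]
      have h2 : (1:ℤ) ≤ (d' b c : ℤ) := by exact_mod_cast Nat.one_le_iff_ne_zero.2 hbc
      have h3 : (1:ℤ) ≤ (n b : ℤ) := by exact_mod_cast hb
      nlinarith
    have hsumpos : (1:ℤ) ≤ ∑ u, (if u = c then 0 else (d' u c : ℤ) * (n u : ℤ)) := by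
      refine le_trans hterm (Finset.single_le_sum (f := fun u => if u = c then 0 else (d' u c : ℤ) * (n u : ℤ)) (fun u _ => ?_) (Finset.mem_univ b))
      by_cases hu : u = c
      · simp [hu]
      · rw [if_neg hu]
        positivity
    rw [hnc] at h1
    push_cast at h1
    linarith
  intro u
  have hpath := hsc v₀ u
  induction hpath with
  | refl => exact h₀
  | @tail b c _ hbc ih => exact step b c hbc ih

omit [DecidableEq V] in
/-- Existence of a reachability-minimal vertex in the support of `f`. -/
lemma exists_min_support (d : V → V → ℕ) (f : V → ℕ) (w₀ : V) (hw₀ : f w₀ ≠ 0) :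
    ∃ w : V, f w ≠ 0 ∧ ∀ u, f u ≠ 0 →
      Relation.ReflTransGen (fun a b => d a b ≠ 0) u w →
      Relation.ReflTransGen (fun a b => d a b ≠ 0) w u := by
  classical
  set R : V → V → Prop := fun a b => Relation.ReflTransGen (fun p q => d p q ≠ 0) a b with hR
  set m : V → ℕ := fun v => (Finset.univ.filter (fun u => R u v)).card with hm
  have hne : (Finset.univ.filter (fun v => f v ≠ 0)).Nonempty :=
    ⟨w₀, by simp [hw₀]⟩
  obtain ⟨w, hwmem, hwmin⟩ := Finset.exists_min_image _ m hne
  refine ⟨w, by simpa using hwmem, ?_⟩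
  intro u hu hur
  by_contra hwu
  have hsub : (Finset.univ.filter (fun z => R z u)) ⊂ (Finset.univ.filter (fun z => R z w)) := by
    constructor
    · intro z hz
      simp only [Finset.mem_filter, Finset.mem_univ, true_and] at hz ⊢
      exact hz.trans hur
    · intro hcon
      have hw1 : w ∈ Finset.univ.filter (fun z => R z w) := by
        simp [hR, Relation.ReflTransGen.refl]
      have := hcon hw1
      simp only [Finset.mem_filter, Finset.mem_univ, true_and] at this
      exact hwu this
  have hlt : m u < m w := Finset.card_lt_card hsub
  have := hwmin u (by simp [hu])
  omega

abbrev Comp (d : V → V → ℕ) (w : V) : Type _ :=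
  {u : V // Relation.ReflTransGen (fun a b => d a b ≠ 0) w u ∧
      Relation.ReflTransGen (fun a b => d a b ≠ 0) u w}

abbrev dComp (d : V → V → ℕ) (w : V) : Comp d w → Comp d w → ℕ := fun a b => d a.1 b.1

open scoped Classical in
lemma key (d : V → V → ℕ) (hloop : Loopless d) (y f₀ : V → ℕ)
    (hrec : ∀ w : V, (∃ u : Comp d w, f₀ u.1 ≠ 0) →
      Recurrent (dComp d w) (fun u : Comp d w => y u.1)) :
    ∀ (N : ℕ) (x f : V → ℕ), ∑ v, f v = N → (∀ v, f v ≤ f₀ v) →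
      (∀ v, (y v : ℤ) = (x v : ℤ) + (laplacian d).mulVec (fun u => (f u : ℤ)) v) →
      Reaches d x y := by
  intro N
  induction N using Nat.strong_induction_on with
  | _ N IH =>
  intro x f hN hle hy
  by_cases hf0 : ∀ v, f v = 0
  · refine ⟨[], trivial, funext fun v => ?_⟩
    have h := hy v
    rw [show (fun u => ((f u : ℕ) : ℤ)) = (0 : V → ℤ) from funext fun u => by simp [hf0 u],
      Matrix.mulVec_zero] at h
    have hxy : (x v : ℤ) = (y v : ℤ) := by simpa using h.symm
    show x v = y v
    exact_mod_cast hxy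
  · push_neg at hf0
    obtain ⟨w₀, hw₀⟩ := hf0
    obtain ⟨w, hw, hwmin⟩ := exists_min_support d f w₀ hw₀
    have hwC : Relation.ReflTransGen (fun a b => d a b ≠ 0) w w ∧
        Relation.ReflTransGen (fun a b => d a b ≠ 0) w w :=
      ⟨Relation.ReflTransGen.refl, Relation.ReflTransGen.refl⟩
    obtain ⟨β, hβne, hβleg, hβrun⟩ := hrec w
      ⟨⟨w, hwC⟩, fun h0 => hw (Nat.eq_zero_of_le_zero (h0 ▸ hle w))⟩
    letI : BEq (Comp d w) := instBEqOfDecidableEq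
    -- the firing vector of β is a positive period vector
    have hLn : ∀ v : Comp d w,
        (laplacian (dComp d w)).mulVec (fun u => (β.count u : ℤ)) v = 0 := by
      intro v
      have h := runGame_cast (dComp d w) β (fun u : Comp d w => y u.1) hβleg v
      rw [hβrun] at h
      linarith
    obtain ⟨b0, hb0⟩ := List.exists_mem_of_ne_nil β hβne
    have hb0c : 1 ≤ β.count b0 :=
      Nat.one_le_iff_ne_zero.2 (fun h => (List.count_eq_zero.1 h) hb0)
    have hnpos : ∀ u : Comp d w, 1 ≤ β.count u :=
      period_pos (dComp d w) (fun a => hloop a.1) (comp_strongly_connected d w)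
        (fun u => β.count u) hLn b0 hb0c
    -- set up the iterated sequence
    have hfw1 : 1 ≤ f w := Nat.one_le_iff_ne_zero.2 hw
    have hiter := iterSeq_spec (dComp d w) (fun u : Comp d w => y u.1) β hβleg hβrun (∑ v, f v)
    have hγcount : ∀ u : Comp d w, f u.1 ≤ (iterSeq β (∑ v, f v)).count u := by
      intro u
      rw [iterSeq_count]
      have h1 : f u.1 ≤ ∑ v, f v :=
        Finset.single_le_sum (fun v _ => Nat.zero_le (f v)) (Finset.mem_univ u.1)
      have h2 := hnpos u
      calc f u.1 ≤ (∑ v, f v) * 1 := by omega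
        _ ≤ (∑ v, f v) * β.count u := Nat.mul_le_mul_left _ h2
    have hγz : ∀ v : Comp d w, ((y v.1 : ℕ) : ℤ) = ((y v.1 : ℕ) : ℤ)
        - (laplacian (dComp d w)).mulVec
            (fun u => ((iterSeq β (∑ v, f v)).count u : ℤ)) v := by
      intro v
      have h1 : (fun u : Comp d w => (((iterSeq β (∑ v, f v)).count u : ℕ) : ℤ))
          = ((∑ v, f v : ℕ) : ℤ) • (fun u : Comp d w => (β.count u : ℤ)) := by
        funext u
        rw [iterSeq_count]
        push_cast
        simp [Pi.smul_apply]
      rw [h1, Matrix.mulVec_smul, Pi.smul_apply, hLn v]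
      simp
    obtain ⟨v, hgv, hbound⟩ := lemA (dComp d w) (fun u : Comp d w => y u.1)
      (iterSeq β (∑ v, f v)) (fun u : Comp d w => y u.1) (fun u : Comp d w => f u.1)
      hiter.1 hγcount hγz
      ⟨⟨w, hwC⟩, hfw1⟩
    -- translate the bound to the big graph
    have hS : ∑ u : V, (if u = v.1 then 0 else (d u v.1 : ℤ) * (f u : ℤ))
        = ∑ u : Comp d w, (if u = v then 0 else (dComp d w u v : ℤ) * ((f u.1 : ℕ) : ℤ)) := by
      set F : V → ℤ := fun z => if z = v.1 then 0 else (d z v.1 : ℤ) * (f z : ℤ) with hF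
      have e1 : ∑ u : Comp d w, (if u = v then 0 else (dComp d w u v : ℤ) * ((f u.1 : ℕ) : ℤ))
          = ∑ u : Comp d w, F u.1 :=
        Finset.sum_congr rfl (fun u _ => by
          rw [hF]
          dsimp only
          by_cases hu : u = v
          · rw [if_pos hu, if_pos (show u.1 = v.1 from by rw [hu])]
          · rw [if_neg hu, if_neg (fun h => hu (Subtype.ext h))])
      have e2 : ∑ z ∈ Finset.univ.filter
            (fun z : V => Relation.ReflTransGen (fun a b => d a b ≠ 0) w z ∧
              Relation.ReflTransGen (fun a b => d a b ≠ 0) z w), F z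
          = ∑ u : Comp d w, F u.1 :=
        Finset.sum_subtype _ (fun z => by simp) F
      rw [e1, ← e2, hF]
      refine (Finset.sum_subset (Finset.subset_univ _) ?_).symm
      intro z _ hz
      simp only [Finset.mem_filter, Finset.mem_univ, true_and] at hz
      by_cases hzv : z = v.1
      · rw [if_pos hzv]
      · rw [if_neg hzv]
        by_cases hd : d z v.1 = 0
        · rw [hd]; simp
        · by_cases hf : f z = 0
          · rw [hf]; simp
          · exfalso
            have h1 : Relation.ReflTransGen (fun a b => d a b ≠ 0) z v.1 :=
              Relation.ReflTransGen.single hd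
            have h2 : Relation.ReflTransGen (fun a b => d a b ≠ 0) z w := h1.trans v.2.2
            exact hz ⟨hwmin z hf h2, h2⟩
    have hxval : (x v.1 : ℤ) = (y v.1 : ℤ) + (outdeg d v.1 : ℤ) * (f v.1 : ℤ)
        - ∑ u : V, (if u = v.1 then 0 else (d u v.1 : ℤ) * (f u : ℤ)) := by
      have h := hy v.1
      rw [lap_mulVec] at h
      linarith
    have hod : (outdeg (dComp d w) v : ℤ) ≤ (outdeg d v.1 : ℤ) := by
      have h1 : outdeg (dComp d w) v ≤ outdeg d v.1 := by
        show (∑ u : Comp d w, d v.1 u.1) ≤ ∑ u : V, d v.1 u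
        rw [show (∑ u : Comp d w, d v.1 u.1)
            = ∑ z ∈ Finset.univ.filter
                (fun z : V => Relation.ReflTransGen (fun a b => d a b ≠ 0) w z ∧
                  Relation.ReflTransGen (fun a b => d a b ≠ 0) z w), d v.1 z from
          (Finset.sum_subtype _ (fun z => by simp) (fun z => d v.1 z)).symm]
        exact Finset.sum_le_sum_of_subset (Finset.subset_univ _)
      exact_mod_cast h1
    have hfv1 : (1:ℤ) ≤ (f v.1 : ℤ) := by exact_mod_cast hgv
    have hxv : (outdeg d v.1 : ℤ) ≤ (x v.1 : ℤ) := by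
      rw [hxval, hS]
      have hprod : (0:ℤ) ≤ ((outdeg d v.1 : ℤ) - (outdeg (dComp d w) v : ℤ)) * ((f v.1 : ℤ) - 1) :=
        mul_nonneg (by linarith) (by linarith)
      nlinarith [hbound]
    have hxvN : outdeg d v.1 ≤ x v.1 := by exact_mod_cast hxv
    -- fire v and recurse
    have hgv1 : 1 ≤ f v.1 := hgv
    have e3 : ∑ u, Function.update f v.1 (f v.1 - 1) u
        = (f v.1 - 1) + ∑ u ∈ Finset.univ \ {v.1}, f u :=
      Finset.sum_update_of_mem (Finset.mem_univ v.1) f (f v.1 - 1)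
    have e4 : f v.1 + ∑ u ∈ Finset.univ \ {v.1}, f u = ∑ u, f u := by
      rw [← Finset.erase_eq]
      exact Finset.add_sum_erase _ _ (Finset.mem_univ v.1)
    have hlt : ∑ u, Function.update f v.1 (f v.1 - 1) u < N := by omega
    have hle' : ∀ u, Function.update f v.1 (f v.1 - 1) u ≤ f₀ u := by
      intro u
      by_cases hu : u = v.1
      · subst hu
        rw [Function.update_self]
        have h5 := hle v.1
        omega
      · rw [Function.update_of_ne hu]
        exact hle u
    have hy2 : ∀ u, (y u : ℤ) = ((fire d x v.1) u : ℤ)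
        + (laplacian d).mulVec (fun z => ((Function.update f v.1 (f v.1 - 1)) z : ℤ)) u := by
      intro u
      have hfc : (fun z => ((f z : ℕ) : ℤ))
          = (fun z => (((Function.update f v.1 (f v.1 - 1)) z : ℕ) : ℤ))
            + (fun z => if z = v.1 then 1 else 0) := by
        funext z
        by_cases hz : z = v.1
        · subst hz
          rw [Pi.add_apply, Function.update_self, if_pos rfl, Nat.cast_sub hgv1]
          ring
        · rw [Pi.add_apply, Function.update_of_ne hz, if_neg hz]
          ring
      have h := hy u
      rw [hfc, Matrix.mulVec_add] at h
      rw [fire_cast d x v.1 hxvN u]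
      simp only [Pi.add_apply, mulVec_delta] at h ⊢
      linarith
    obtain ⟨α, hαleg, hαrun⟩ :=
      IH (∑ u, Function.update f v.1 (f v.1 - 1) u) hlt (fire d x v.1)
        (Function.update f v.1 (f v.1 - 1)) rfl hle' hy2
    refine ⟨v.1 :: α, ?_, hαrun⟩
    show outdeg d v.1 ≤ x v.1 ∧ LegalSeq d (fire d x v.1) α
    exact ⟨hxvN, hαleg⟩

end ChipFiring

namespace ChipFiring

open scoped Classical in
/-- Let `G` be a weakly connected digraph and `x, y` chip-distributions
with `y = x + Lf` for some `f ∈ ℕ^V`. If for each strongly connected component (here: the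
strongly connected component of each vertex `w`, viewed as an induced sub-digraph on the
subtype of vertices mutually reachable with `w`), either `f` restricted to the component
is zero, or `y` restricted to the component is recurrent on the induced sub-digraph,
then `x ⤳ y`. -/
theorem reaches_of_componentwise_recurrent {V : Type*} [Fintype V] [DecidableEq V]
    (d : V → V → ℕ) (hloop : Loopless d) (hconn : WeaklyConnected d)
    (x y f : V → ℕ)
    (hy : ∀ v, (y v : ℤ) = (x v : ℤ) + (laplacian d).mulVec (fun u => (f u : ℤ)) v)
    (hcomp : ∀ w : V,
      (∀ u : {u : V // Relation.ReflTransGen (fun a b => d a b ≠ 0) w u ∧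
          Relation.ReflTransGen (fun a b => d a b ≠ 0) u w}, f u.1 = 0) ∨
      Recurrent
        (fun a b : {u : V // Relation.ReflTransGen (fun a b => d a b ≠ 0) w u ∧
            Relation.ReflTransGen (fun a b => d a b ≠ 0) u w} => d a.1 b.1)
        (fun u => y u.1)) :
    Reaches d x y := by
  have hrec : ∀ w : V, (∃ u : Comp d w, f u.1 ≠ 0) →
      Recurrent (dComp d w) (fun u : Comp d w => y u.1) := by
    intro w hex
    rcases hcomp w with h0 | hr
    · obtain ⟨u, hu⟩ := hex
      exact absurd (h0 u) hu
    · exact hr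
  exact key d hloop y f hrec (∑ v, f v) x f rfl (fun v => le_refl _) hy

end ChipFiring
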